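/- Let σ²(t) = ∑_{k=1}^{∞} k² tᵏ/(1+tᵏ)² for t ∈ (0,1). For every constant C > 0 there exist B > 0 and r₀ > 0 such that for all r ∈ (0, r₀) and all θ ∈ ℝ with C·r^{−1/2} ≤ |θ| ≤ π σ(e^{−r}), one has ∏_{k=1}^{∞} |1 + e^{−kr} e^{i k θ/σ(e^{−r})}| / (1 + e^{−kr}) ≤ e^{−B/r}. -/

import Mathlib

open Filter Topology Real

/-- The variance `σ²(t) = ∑_{k≥1} k² tᵏ/(1+tᵏ)²` associated to `∏(1+zᵏ)`
(the `k = 0` term vanishes). -/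
noncomputable def sigma2 (t : ℝ) : ℝ :=
  ∑' k : ℕ, (k : ℝ) ^ 2 * t ^ k / (1 + t ^ k) ^ 2

lemma mul_exp_neg_le {y : ℝ} : y * Real.exp (-y) ≤ Real.exp (-1) := by
  have h := Real.add_one_le_exp (y - 1)
  calc y * Real.exp (-y) ≤ Real.exp (y - 1) * Real.exp (-y) :=
      mul_le_mul_of_nonneg_right (by linarith) (Real.exp_pos _).le
    _ = Real.exp (-1) := by rw [← Real.exp_add]; ring_nf

lemma term_bound {r : ℝ} (hr : 0 < r) (k : ℕ) :
    (k:ℝ)^2 * Real.exp (-r)^k / (1 + Real.exp (-r)^k)^2 ≤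
      16 / (Real.exp 1^2 * r^2) * Real.exp (-(r/2))^k := by
  have e1 : Real.exp (-r) ^ k = Real.exp (-((k:ℝ)*r)) := by
    rw [← Real.exp_nat_mul]; ring_nf
  have e2 : Real.exp (-(r/2)) ^ k = Real.exp (-((k:ℝ)*r)/2) := by
    rw [← Real.exp_nat_mul]; ring_nf
  have hpos : (0:ℝ) < Real.exp (-((k:ℝ)*r)) := Real.exp_pos _
  have step1 : (k:ℝ)^2 * Real.exp (-r)^k / (1 + Real.exp (-r)^k)^2
      ≤ (k:ℝ)^2 * Real.exp (-((k:ℝ)*r)) := by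
    rw [e1]
    apply div_le_self (by positivity)
    nlinarith
  refine step1.trans ?_
  rw [e2]
  -- key: k * exp(-(k r)/4) ≤ (4/r) * exp (-1)
  have hk4 : (k:ℝ) * Real.exp (-((k:ℝ)*r)/4) ≤ 4/r * Real.exp (-1) := by
    have h := mul_exp_neg_le (y := (k:ℝ)*r/4)
    have hr4 : (0:ℝ) < 4/r := by positivity
    have : (k:ℝ) * Real.exp (-((k:ℝ)*r)/4) = 4/r * ((k:ℝ)*r/4 * Real.exp (-((k:ℝ)*r/4))) := by
      field_simp
    rw [this]
    have h' : (k:ℝ)*r/4 * Real.exp (-((k:ℝ)*r/4)) ≤ Real.exp (-1) := h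
    calc 4/r * ((k:ℝ)*r/4 * Real.exp (-((k:ℝ)*r/4)))
        ≤ 4/r * Real.exp (-1) := by
          exact mul_le_mul_of_nonneg_left h' hr4.le
      _ = 4/r * Real.exp (-1) := rfl
  -- square it
  have hsq : (k:ℝ)^2 * Real.exp (-((k:ℝ)*r)/2) ≤ 16 / (Real.exp 1^2 * r^2) := by
    have hL : (k:ℝ)^2 * Real.exp (-((k:ℝ)*r)/2) = ((k:ℝ) * Real.exp (-((k:ℝ)*r)/4))^2 := by
      have h2 : Real.exp (-((k:ℝ)*r)/4) ^ 2 = Real.exp (-((k:ℝ)*r)/2) := by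
        rw [sq, ← Real.exp_add]
        congr 1
        ring
      rw [mul_pow, h2]
    have hR : (4/r * Real.exp (-1))^2 = 16 / (Real.exp 1^2 * r^2) := by
      rw [Real.exp_neg, mul_pow]
      field_simp
      ring
    rw [hL, ← hR]
    apply pow_le_pow_left₀ (by positivity) hk4
  calc (k:ℝ)^2 * Real.exp (-((k:ℝ)*r))
      = ((k:ℝ)^2 * Real.exp (-((k:ℝ)*r)/2)) * Real.exp (-((k:ℝ)*r)/2) := by
        rw [mul_assoc, ← Real.exp_add]; ring_nf
    _ ≤ 16 / (Real.exp 1^2 * r^2) * Real.exp (-((k:ℝ)*r)/2) :=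
        mul_le_mul_of_nonneg_right hsq (Real.exp_pos _).le


lemma summable_sigma2 {t : ℝ} (h0 : 0 < t) (h1 : t < 1) :
    Summable (fun k : ℕ => (k : ℝ) ^ 2 * t ^ k / (1 + t ^ k) ^ 2) := by
  apply Summable.of_nonneg_of_le (fun k => by positivity)
    (fun k => ?_) (summable_pow_mul_geometric_of_norm_lt_one 2 (r := t)
      (by rw [Real.norm_eq_abs, abs_of_pos h0]; exact h1))
  calc (k : ℝ) ^ 2 * t ^ k / (1 + t ^ k) ^ 2 ≤ (k : ℝ) ^ 2 * t ^ k := by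
        apply div_le_self (by positivity)
        nlinarith [pow_pos h0 k]
    _ = (k : ℝ) ^ 2 * t ^ k := rfl

lemma sigma2_pos {t : ℝ} (h0 : 0 < t) (h1 : t < 1) : 0 < sigma2 t := by
  apply Summable.tsum_pos (summable_sigma2 h0 h1) (fun k => by positivity) 1
  have : (0:ℝ) < t ^ 1 := by positivity
  positivity

lemma one_sub_exp_neg_ge {r : ℝ} (h0 : 0 ≤ r) (h1 : r ≤ 1) :
    r / 2 ≤ 1 - Real.exp (-r) := by
  have h2 : (1:ℝ) + r ≤ Real.exp r := by
    have := Real.add_one_le_exp r; linarith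
  have h3 : (0:ℝ) < Real.exp r := Real.exp_pos r
  have h4 : Real.exp (-r) ≤ 1 - r / 2 := by
    rw [Real.exp_neg, inv_le_iff_one_le_mul₀ h3]
    nlinarith
  linarith

lemma sigma2_le {r : ℝ} (hr : 0 < r) (hr1 : r ≤ 1) :
    sigma2 (Real.exp (-r)) ≤ 16 / r ^ 3 := by
  have hs0 : (0:ℝ) < Real.exp (-(r/2)) := Real.exp_pos _
  have hs1 : Real.exp (-(r/2)) < 1 := by
    apply Real.exp_lt_one_iff.mpr; linarith
  have hgeo : Summable (fun k : ℕ => 16 / (Real.exp 1^2 * r^2) * Real.exp (-(r/2)) ^ k) :=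
    (summable_geometric_of_lt_one hs0.le hs1).mul_left _
  have ht0 : (0:ℝ) < Real.exp (-r) := Real.exp_pos _
  have ht1 : Real.exp (-r) < 1 := Real.exp_lt_one_iff.mpr (by linarith)
  have h1 : sigma2 (Real.exp (-r)) ≤
      ∑' k : ℕ, 16 / (Real.exp 1^2 * r^2) * Real.exp (-(r/2)) ^ k :=
    Summable.tsum_le_tsum (fun k => term_bound hr k) (summable_sigma2 ht0 ht1) hgeo
  rw [tsum_mul_left, tsum_geometric_of_lt_one hs0.le hs1] at h1
  have h2 : (1 - Real.exp (-(r/2)))⁻¹ ≤ 4 / r := by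
    have h3 : r / 4 ≤ 1 - Real.exp (-(r/2)) := by
      have := one_sub_exp_neg_ge (r := r/2) (by linarith) (by linarith)
      linarith
    rw [inv_le_comm₀ (by linarith) (by positivity)]
    rw [inv_div]
    linarith [h3]
  have he : (2:ℝ) < Real.exp 1 := by
    have := Real.exp_one_gt_d9; nlinarith
  calc sigma2 (Real.exp (-r)) ≤ 16 / (Real.exp 1^2 * r^2) * (1 - Real.exp (-(r/2)))⁻¹ := h1
    _ ≤ 16 / (Real.exp 1^2 * r^2) * (4 / r) := by
        apply mul_le_mul_of_nonneg_left h2 (by positivity)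
    _ ≤ 16 / r ^ 3 := by
        have he2 : (4:ℝ) ≤ Real.exp 1 ^ 2 := by nlinarith
        rw [div_mul_div_comm, div_le_div_iff₀ (by positivity) (by positivity)]
        nlinarith [pow_pos hr 3]
section
variable {t α : ℝ}

lemma abs_sq_eq (t α : ℝ) (k : ℕ) :
    (‖1 + (t:ℂ)^k * Complex.exp ((((k:ℝ)*α : ℝ) : ℂ) * Complex.I)‖)^2
      = 1 + 2*t^k*Real.cos ((k:ℝ)*α) + (t^k)^2 := by
  have h1 : ((t:ℂ))^k = ((t^k : ℝ) : ℂ) := by push_cast; ring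
  rw [h1, Complex.sq_norm, Complex.normSq_apply]
  simp only [Complex.add_re, Complex.add_im, Complex.re_ofReal_mul, Complex.im_ofReal_mul,
    Complex.one_re, Complex.one_im, Complex.exp_ofReal_mul_I_re, Complex.exp_ofReal_mul_I_im]
  have hsc := Real.sin_sq_add_cos_sq ((k:ℝ)*α)
  nlinarith [hsc]

lemma abs_one_sub_sq (t α : ℝ) :
    (‖1 - (t:ℂ) * Complex.exp ((α : ℂ) * Complex.I)‖)^2
      = (1-t)^2 + 2*t*(1 - Real.cos α) := by
  rw [Complex.sq_norm, Complex.normSq_apply]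
  simp only [Complex.sub_re, Complex.sub_im, Complex.re_ofReal_mul, Complex.im_ofReal_mul,
    Complex.one_re, Complex.one_im, Complex.exp_ofReal_mul_I_re, Complex.exp_ofReal_mul_I_im]
  have hsc := Real.sin_sq_add_cos_sq α
  linear_combination (t^2) * hsc

lemma zpow_re (t α : ℝ) (k : ℕ) :
    (((t:ℂ) * Complex.exp ((α : ℂ) * Complex.I))^k).re = t^k * Real.cos ((k:ℝ)*α) := by
  have h2 : Complex.exp ((α:ℂ) * Complex.I) ^ k
      = Complex.exp ((((k:ℝ)*α : ℝ):ℂ) * Complex.I) := by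
    rw [← Complex.exp_nat_mul]
    congr 1
    push_cast
    ring
  rw [mul_pow, h2]
  have h1 : ((t:ℂ))^k = ((t^k : ℝ) : ℂ) := by push_cast; ring
  rw [h1, Complex.re_ofReal_mul, Complex.exp_ofReal_mul_I_re]

lemma znorm (t α : ℝ) : ‖(t:ℂ) * Complex.exp ((α : ℂ) * Complex.I)‖ = |t| := by
  rw [norm_mul, Complex.norm_real, Real.norm_eq_abs,
    Complex.norm_exp_ofReal_mul_I, mul_one]

end

set_option maxHeartbeats 2000000 in
/-- Exponential bound on the characteristic function of `Z_t` away from the origin: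
for every `C > 0` there are `B > 0` and `r₀ > 0` such that for `0 < r < r₀` and
`C r^{−1/2} ≤ |θ| ≤ π σ(e^{−r})` one has
`∏_{k≥1} |1 + e^{−kr} e^{ikθ/σ(e^{−r})}|/(1+e^{−kr}) ≤ e^{−B/r}`.
(The `k = 0` factor of the product equals `1`.) -/
theorem charFun_bound_large_theta (C : ℝ) (hC : 0 < C) :
    ∃ B > (0 : ℝ), ∃ r₀ > (0 : ℝ), ∀ r ∈ Set.Ioo (0 : ℝ) r₀, ∀ θ : ℝ,
      C / Real.sqrt r ≤ |θ| → |θ| ≤ π * Real.sqrt (sigma2 (Real.exp (-r))) →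
      (∏' k : ℕ, ‖
          (1 + (Real.exp (-r) : ℂ) ^ k *
            Complex.exp (Complex.I * (k : ℂ) * (θ : ℂ) /
              ((Real.sqrt (sigma2 (Real.exp (-r))) : ℝ) : ℂ)))‖ /
          (1 + Real.exp (-r) ^ k)) ≤ Real.exp (-B / r) := by
  have hπ := Real.pi_pos
  set δ : ℝ := C^2/(8*π^2) with hδdef
  have hδ : 0 < δ := by positivity
  have hsq1 : 1 < Real.sqrt (1+δ) := by
    rw [show (1:ℝ) = Real.sqrt 1 by simp]
    exact Real.sqrt_lt_sqrt (by norm_num) (by simp; linarith)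
  set ε : ℝ := 1 - (Real.sqrt (1+δ))⁻¹ with hεdef
  have hε : 0 < ε := by
    have h1 : (Real.sqrt (1+δ))⁻¹ < 1 := inv_lt_one_of_one_lt₀ hsq1
    simp only [hεdef]; linarith
  refine ⟨ε/4, by positivity, 1/2, by norm_num, ?_⟩
  rintro r ⟨hr0, hr2⟩ θ hθ1 hθ2
  set t := Real.exp (-r) with htdef
  have ht0 : 0 < t := Real.exp_pos _
  have ht1 : t < 1 := Real.exp_lt_one_iff.mpr (by linarith)
  have htr : 1 - t ≤ r := by
    have := Real.add_one_le_exp (-r)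
    simp only [htdef]; linarith
  have h1t : 0 < 1 - t := by linarith
  have hthalf : 1/2 ≤ t := by linarith
  set σ := Real.sqrt (sigma2 t) with hσdef
  have hsig : 0 < sigma2 t := sigma2_pos ht0 ht1
  have hσ0 : 0 < σ := Real.sqrt_pos.mpr hsig
  have hσsq : σ^2 = sigma2 t := Real.sq_sqrt hsig.le
  -- bound on σ
  have hσle : σ * (r * Real.sqrt r) ≤ 4 := by
    have h16 : sigma2 t ≤ 16 / r^3 := sigma2_le hr0 (by linarith)
    have hrs : Real.sqrt r ^ 2 = r := Real.sq_sqrt hr0.le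
    have h1 : (σ * (r * Real.sqrt r))^2 ≤ 16 := by
      have he : (σ * (r * Real.sqrt r))^2 = sigma2 t * r^3 := by
        rw [mul_pow, mul_pow, hσsq, hrs]; ring
      rw [he]
      calc sigma2 t * r^3 ≤ (16/r^3) * r^3 :=
            mul_le_mul_of_nonneg_right h16 (by positivity)
        _ = 16 := by field_simp
    nlinarith [mul_nonneg hσ0.le (mul_nonneg hr0.le (Real.sqrt_nonneg r))]
  set α : ℝ := θ / σ with hαdef
  have hαabs : |α| = |θ| / σ := by
    rw [hαdef, abs_div, abs_of_pos hσ0]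
  have hα1 : |α| ≤ π := by
    rw [hαabs, div_le_iff₀ hσ0]; linarith
  have hα2 : C * r / 4 ≤ |α| := by
    rw [hαabs, le_div_iff₀ hσ0]
    have hsr : 0 < Real.sqrt r := Real.sqrt_pos.mpr hr0
    have h1 : C * r / 4 * σ ≤ C / Real.sqrt r := by
      rw [le_div_iff₀ hsr]
      calc C * r / 4 * σ * Real.sqrt r = C / 4 * (σ * (r * Real.sqrt r)) := by ring
        _ ≤ C / 4 * 4 := mul_le_mul_of_nonneg_left hσle (by positivity)
        _ = C := by ring
    exact h1.trans hθ1
  -- sequences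
  set a : ℕ → ℝ := fun k =>
    ‖1 + (t:ℂ)^k * Complex.exp ((((k:ℝ)*α : ℝ) : ℂ) * Complex.I)‖ / (1 + t^k)
    with hadef
  set s : ℕ → ℝ := fun k => t^k * (1 - Real.cos ((k:ℝ)*α)) / (1 + t^k)^2 with hsdef
  set u : ℕ → ℝ := fun k => t^k * (1 - Real.cos ((k:ℝ)*α)) with hudef
  have htk0 : ∀ k : ℕ, 0 < t^k := fun k => pow_pos ht0 k
  have htk1 : ∀ k : ℕ, t^k ≤ 1 := fun k => pow_le_one₀ ht0.le ht1.le
  have hcos1 : ∀ k : ℕ, Real.cos ((k:ℝ)*α) ≤ 1 := fun k => Real.cos_le_one _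
  have hcos2 : ∀ k : ℕ, -1 ≤ Real.cos ((k:ℝ)*α) := fun k => Real.neg_one_le_cos _
  have hs0 : ∀ k, 0 ≤ s k := fun k => by
    simp only [hsdef]
    apply div_nonneg _ (by positivity)
    nlinarith [htk0 k, hcos1 k]
  have hsu : ∀ k, u k / 4 ≤ s k := fun k => by
    simp only [hsdef, hudef]
    apply div_le_div_of_nonneg_left ?_ (by positivity) ?_
    · have := htk0 k; have := hcos1 k; nlinarith
    · nlinarith [htk0 k, htk1 k]
  have hu2 : ∀ k, u k ≤ 2 * t^k := fun k => by
    simp only [hudef]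
    nlinarith [htk0 k, hcos2 k]
  have hu0 : ∀ k, 0 ≤ u k := fun k => by
    simp only [hudef]; nlinarith [htk0 k, hcos1 k]
  have hgeo : Summable (fun k : ℕ => t^k) := summable_geometric_of_lt_one ht0.le ht1
  have hsummu : Summable u :=
    Summable.of_nonneg_of_le hu0 hu2 (hgeo.mul_left 2)
  have hsumms : Summable s := by
    apply Summable.of_nonneg_of_le hs0 (fun k => ?_) hsummu
    simp only [hsdef, hudef]
    apply div_le_self (by nlinarith [htk0 k, hcos1 k])
    nlinarith [htk0 k, htk1 k]
  -- geometric series computation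
  set z : ℂ := (t:ℂ) * Complex.exp ((α : ℂ) * Complex.I) with hzdef
  have hznorm : ‖z‖ < 1 := by
    rw [hzdef, znorm, abs_of_pos ht0]; exact ht1
  have hgeoz : HasSum (fun k : ℕ => z^k) (1-z)⁻¹ := hasSum_geometric_of_norm_lt_one hznorm
  have hrez : HasSum (fun k : ℕ => t^k * Real.cos ((k:ℝ)*α)) ((1-z)⁻¹).re := by
    have h := Complex.hasSum_re hgeoz
    refine h.congr_fun fun k => ?_
    rw [hzdef, zpow_re]
  have hgeot : HasSum (fun k : ℕ => t^k) (1-t)⁻¹ := hasSum_geometric_of_lt_one ht0.le ht1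
  set T : ℝ := (1-t)⁻¹ - ((1-z)⁻¹).re with hTdef
  have hU : HasSum u T := by
    have h := hgeot.sub hrez
    refine h.congr_fun fun k => ?_
    simp only [hudef]; ring
  -- lower bound on T
  have hT : ε / r ≤ T := by
    set D : ℝ := ‖1 - z‖ with hDdef
    have hD2 : D^2 = (1-t)^2 + 2*t*(1 - Real.cos α) := by
      rw [hDdef, hzdef, abs_one_sub_sq]
    have hcosα : Real.cos α ≤ 1 - 2/π^2*α^2 := Real.cos_le_one_sub_mul_cos_sq hα1
    have hα2' : (C*r/4)^2 ≤ α^2 := by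
      rw [← sq_abs α]
      exact pow_le_pow_left₀ (by positivity) hα2 2
    have hrt2 : (1-t)^2 ≤ r^2 := pow_le_pow_left₀ h1t.le htr 2
    have hπ2 : (0:ℝ) < π^2 := by positivity
    have hca : 0 ≤ 1 - Real.cos α := by nlinarith [Real.cos_le_one α]
    have hD2' : (1-t)^2*(1+δ) ≤ D^2 := by
      have e1 : 2/π^2*α^2 ≤ 1 - Real.cos α := by linarith
      have key : δ * (1-t)^2 ≤ 2*t*(1 - Real.cos α) := by
        calc δ * (1-t)^2 ≤ δ * r^2 := mul_le_mul_of_nonneg_left hrt2 hδ.le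
          _ = 2/π^2 * (C*r/4)^2 := by rw [hδdef]; field_simp; ring
          _ ≤ 2/π^2 * α^2 := mul_le_mul_of_nonneg_left hα2' (by positivity)
          _ ≤ 1 - Real.cos α := e1
          _ ≤ 2*t*(1 - Real.cos α) := by nlinarith [hca]
      have expand : (1-t)^2*(1+δ) = (1-t)^2 + δ*(1-t)^2 := by ring
      rw [hD2]
      linarith
    have hDpos : 0 < D := by
      have h4 : 0 < (1-t)^2*(1+δ) := by positivity
      nlinarith [norm_nonneg (1-z)]
    have hDge : (1-t) * Real.sqrt (1+δ) ≤ D := by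
      have h5 : (1-t) * Real.sqrt (1+δ) = Real.sqrt ((1-t)^2*(1+δ)) := by
        rw [Real.sqrt_mul (sq_nonneg _), Real.sqrt_sq h1t.le]
      rw [h5, show D = Real.sqrt (D^2) from (Real.sqrt_sq hDpos.le).symm]
      exact Real.sqrt_le_sqrt hD2'
    have hre_le : ((1-z)⁻¹).re ≤ D⁻¹ := by
      have h6 := Complex.re_le_norm (1-z)⁻¹
      rwa [norm_inv, ← hDdef] at h6
    have hDinv : D⁻¹ ≤ (1-t)⁻¹ * (Real.sqrt (1+δ))⁻¹ := by
      rw [← mul_inv]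
      exact inv_anti₀ (by positivity) hDge
    have h7 : (1-t)⁻¹ * ε ≤ T := by
      have : (1-t)⁻¹ * ε = (1-t)⁻¹ - (1-t)⁻¹ * (Real.sqrt (1+δ))⁻¹ := by
        rw [hεdef]; ring
      rw [this, hTdef]
      linarith
    have h8 : ε / r ≤ (1-t)⁻¹ * ε := by
      rw [show (1-t)⁻¹ * ε = ε / (1-t) by ring]
      exact div_le_div_of_nonneg_left hε.le h1t htr
    linarith
  -- factor bounds
  have habsk : ∀ k : ℕ,
      ‖(t:ℂ)^k * Complex.exp ((((k:ℝ)*α : ℝ):ℂ) * Complex.I)‖ = t^k := by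
    intro k
    rw [norm_mul, norm_pow, Complex.norm_real, Real.norm_eq_abs, Complex.norm_exp_ofReal_mul_I, mul_one,
      abs_of_pos ht0]
  have hfa : ∀ k, a k ≤ Real.exp (-(s k)) := by
    intro k
    have hden : (0:ℝ) < 1 + t^k := by nlinarith [htk0 k]
    have hA2 : (a k)^2 = 1 - 2 * s k := by
      simp only [hadef, hsdef]
      rw [div_pow, abs_sq_eq]
      field_simp
      ring
    have ha0 : 0 ≤ a k := by
      simp only [hadef]; positivity
    have h1 : (a k)^2 ≤ (Real.exp (-(s k)))^2 := by
      have h2 : (Real.exp (-(s k)))^2 = Real.exp (-(2 * s k)) := by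
        rw [sq, ← Real.exp_add]; congr 1; ring
      rw [hA2, h2]
      have h3 := Real.add_one_le_exp (-(2 * s k))
      linarith
    calc a k = Real.sqrt ((a k)^2) := (Real.sqrt_sq ha0).symm
      _ ≤ Real.sqrt ((Real.exp (-(s k)))^2) := Real.sqrt_le_sqrt h1
      _ = Real.exp (-(s k)) := Real.sqrt_sq (Real.exp_pos _).le
  set m : ℝ := (1-t)/2 with hmdef
  have hm0 : 0 < m := by simp only [hmdef]; positivity
  have h1ak : ∀ k : ℕ, 1 - a k ≤ 2 * t^k ∧ m ≤ a k ∧ a k ≤ 1 := by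
    intro k
    have hden : (0:ℝ) < 1 + t^k := by nlinarith [htk0 k]
    set w : ℂ := (t:ℂ)^k * Complex.exp ((((k:ℝ)*α : ℝ):ℂ) * Complex.I) with hwdef
    have hAup : ‖1 + w‖ ≤ 1 + t^k := by
      calc ‖1 + w‖ ≤ ‖(1:ℂ)‖ + ‖w‖ := norm_add_le _ _
        _ = 1 + t^k := by rw [norm_one, hwdef, habsk k]
    have hAlow : 1 - t^k ≤ ‖1 + w‖ := by
      have h3 : ‖(1 + w) + (-w)‖ ≤ ‖1 + w‖ + ‖-w‖ :=
        norm_add_le _ _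
      rw [add_neg_cancel_right, norm_one, norm_neg, hwdef, habsk k] at h3
      linarith
    have hak_eq : a k = ‖1 + w‖ / (1 + t^k) := by
      simp only [hadef, hwdef]
    refine ⟨?_, ?_, ?_⟩
    · have h4 : 1 - 2*t^k ≤ (1 - t^k)/(1 + t^k) := by
        rw [le_div_iff₀ hden]
        nlinarith [htk0 k]
      have h5 : (1 - t^k)/(1 + t^k) ≤ a k := by
        rw [hak_eq]
        exact div_le_div_of_nonneg_right hAlow hden.le
      linarith
    · rcases Nat.eq_zero_or_pos k with hk | hk
      · subst hk
        have : a 0 = 1 := by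
          simp only [hadef]
          norm_num
        rw [this]
        simp only [hmdef]; linarith
      · have htkt : t^k ≤ t := by
          calc t^k ≤ t^1 := pow_le_pow_of_le_one ht0.le ht1.le hk
            _ = t := pow_one t
        have h6 : 1 - t ≤ ‖1 + w‖ := by linarith
        have h7 : (1-t)/2 ≤ (1-t)/(1 + t^k) := by
          apply div_le_div_of_nonneg_left h1t.le hden
          nlinarith [htk0 k, htk1 k]
        have h8 : (1-t)/(1 + t^k) ≤ a k := by
          rw [hak_eq]
          exact div_le_div_of_nonneg_right h6 hden.le
        simp only [hmdef]; linarith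
    · rw [hak_eq, div_le_one hden]
      exact hAup
  have hapos : ∀ k, 0 < a k := fun k => lt_of_lt_of_le hm0 (h1ak k).2.1
  have hlog : Summable (fun k => Real.log (a k)) := by
    apply Summable.of_norm_bounded (g := fun k => 2/m * t^k) (hgeo.mul_left _)
    intro k
    obtain ⟨hk1, hk2, hk3⟩ := h1ak k
    have hak0 : 0 < a k := hapos k
    rw [Real.norm_eq_abs, abs_of_nonpos (Real.log_nonpos hak0.le hk3), ← Real.log_inv]
    have h5 := Real.log_le_sub_one_of_pos (inv_pos.mpr hak0)
    have h6 : (a k)⁻¹ - 1 = (1 - a k)/(a k) := by field_simp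
    have h7 : (1 - a k)/(a k) ≤ 2*t^k/m := div_le_div₀ (by positivity) hk1 hm0 hk2
    calc Real.log (a k)⁻¹ ≤ (a k)⁻¹ - 1 := h5
      _ = (1 - a k)/(a k) := h6
      _ ≤ 2*t^k/m := h7
      _ = 2/m*t^k := by ring
  have hmult : Multipliable a :=
    Real.multipliable_of_summable_log hapos hlog
  set S : ℝ := ∑' k, s k with hSdef
  have hS : ε/(4*r) ≤ S := by
    have h9 : T/4 ≤ S := by
      calc T/4 = ∑' k, u k/4 := ((hU.div_const 4).tsum_eq).symm
        _ ≤ S := Summable.tsum_le_tsum hsu (hU.summable.div_const 4) hsumms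
    have h10 : ε/(4*r) = (ε/r)/4 := by ring
    linarith
  have hmain : (∏' k, a k) ≤ Real.exp (-S) := by
    refine le_of_tendsto_of_tendsto' hmult.hasProd ((hsumms.hasSum.neg).rexp) (fun F => ?_)
    exact Finset.prod_le_prod (fun k _ => (hapos k).le) (fun k _ => hfa k)
  have hgoal : ∀ k : ℕ, Complex.I * (k:ℂ) * (θ:ℂ) / ((σ : ℝ):ℂ) = (((k:ℝ)*α : ℝ):ℂ) * Complex.I := by
    intro k
    rw [hαdef]
    push_cast
    ring
  simp only [hgoal]
  calc (∏' k, a k) ≤ Real.exp (-S) := hmain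
    _ ≤ Real.exp (-(ε/4)/r) := by
      apply Real.exp_le_exp.mpr
      have h11 : -(ε/4)/r = -(ε/(4*r)) := by ring
      rw [h11]
      linarith
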